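/- At an equilibrium point (Δ_j, θ_j) of the reduced system (with sin(2θ_j) = 0, cos(2θ_j) = c_j ∈ {−1, 1}, P_j − Δ_j > 0, and c_j(2Ã(Δ_j − P_j) + B̃(Δ_j + P_j)) = √(2(P_j − Δ_j))), the Jacobian matrix of the reduced vector field has eigenvalues ± λ_j, where λ_j² = ( −3 − 18Ã(Ã+B̃)C + 6(−1)^j √(1 + 6Ã(Ã+B̃)C) ) / 9, provided Ã ≠ 0, B̃ ≠ 0, Ã + B̃ ≠ 0 and 1 + 6Ã(Ã+B̃)C > 0; here Δ_j = (Ã+B̃)·(6Ã²C − 3ÃB̃C − (−1)^j √(1 + 6Ã(Ã+B̃)C) − 1) / (18Ã²B̃) and P_j = C + ((Ã−B̃)/(Ã+B̃)) Δ_j. -/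

import Mathlib

set_option maxHeartbeats 1000000 in
/-- At an equilibrium point `(Δ_j, θ_j)` of the reduced system, the Jacobian matrix
of the reduced vector field has eigenvalues `±λ_j` with
`λ_j² = (−3 − 18Ã(Ã+B̃)C + 6(−1)^j √(1+6Ã(Ã+B̃)C))/9`; equivalently, the Jacobian
has zero trace and determinant `−λ_j²`. -/
theorem reduced_system_jacobian_eigenvalues
    (A B C : ℝ) (hA : A ≠ 0) (hB : B ≠ 0) (hAB : A + B ≠ 0)
    (hs : 0 < 1 + 6 * A * (A + B) * C)
    (j : ℕ) (hj : j = 1 ∨ j = 2) (c θj : ℝ) (hc : c = 1 ∨ c = -1) :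
    let P : ℝ → ℝ := fun Δ => C + ((A - B) / (A + B)) * Δ
    let f : ℝ → ℝ → ℝ := fun Δ θ =>
      (A + B) * Real.sin (2 * θ) * (P Δ + Δ) * Real.sqrt (2 * (P Δ - Δ)) / 2
    let g : ℝ → ℝ → ℝ := fun Δ θ =>
      -(2 * A * Real.cos (2 * θ) * (Δ - P Δ) + B * Real.cos (2 * θ) * (Δ + P Δ)
          - Real.sqrt (2 * (P Δ - Δ))) / (2 * Real.sqrt (2 * (P Δ - Δ)))
    let Δj : ℝ := (A + B) *
      (6 * A ^ 2 * C - 3 * A * B * C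
        - (-1 : ℝ) ^ j * Real.sqrt (1 + 6 * A * (A + B) * C) - 1) / (18 * A ^ 2 * B)
    let J : Matrix (Fin 2) (Fin 2) ℝ :=
      !![deriv (fun Δ => f Δ θj) Δj, deriv (fun θ => f Δj θ) θj;
         deriv (fun Δ => g Δ θj) Δj, deriv (fun θ => g Δj θ) θj]
    Real.sin (2 * θj) = 0 →
    Real.cos (2 * θj) = c →
    0 < P Δj - Δj →
    c * (2 * A * (Δj - P Δj) + B * (Δj + P Δj)) = Real.sqrt (2 * (P Δj - Δj)) →
    J.trace = 0 ∧
      J.det = -((-3 - 18 * A * (A + B) * C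
        + 6 * (-1 : ℝ) ^ j * Real.sqrt (1 + 6 * A * (A + B) * C)) / 9) := by
  intro P f g Δj J hsin hcos hpos heq
  have hu0 : (0:ℝ) < 2 * (P Δj - Δj) := by linarith
  have hsq_pos : 0 < Real.sqrt (2 * (P Δj - Δj)) := Real.sqrt_pos.mpr hu0
  have hune : 2 * (P Δj - Δj) ≠ 0 := ne_of_gt hu0
  have h2sq_ne : 2 * Real.sqrt (2 * (P Δj - Δj)) ≠ 0 := by positivity
  have hP : HasDerivAt P ((A - B) / (A + B) * 1) Δj :=
    (((hasDerivAt_id Δj).const_mul ((A - B) / (A + B))).const_add C)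
  -- top-left entry
  have ha : deriv (fun Δ => f Δ θj) Δj = 0 := by
    have h0 : (fun Δ => f Δ θj) = fun _ : ℝ => (0:ℝ) := by
      funext x; simp only [f, hsin]; ring
    rw [h0, deriv_const]
  -- bottom-right entry
  have hd : deriv (fun θ => g Δj θ) θj = 0 := by
    have hcosθ : HasDerivAt (fun θ : ℝ => Real.cos (2*θ)) (-Real.sin (2*θj) * (2*1)) θj :=
      HasDerivAt.comp θj (Real.hasDerivAt_cos _) ((hasDerivAt_id θj).const_mul 2)
    have h1 := (hcosθ.const_mul (2*A)).mul_const (Δj - P Δj)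
    have h2 := (hcosθ.const_mul B).mul_const (Δj + P Δj)
    have h3 := (((h1.add h2).sub_const (Real.sqrt (2 * (P Δj - Δj)))).neg).div_const
      (2 * Real.sqrt (2 * (P Δj - Δj)))
    have h4 : deriv (fun θ => g Δj θ) θj = _ := h3.deriv
    rw [h4, hsin]
    ring
  -- top-right entry
  have hsin2 : HasDerivAt (fun θ : ℝ => Real.sin (2*θ)) (Real.cos (2*θj) * (2*1)) θj :=
    HasDerivAt.comp θj (Real.hasDerivAt_sin _) ((hasDerivAt_id θj).const_mul 2)
  have hbD : HasDerivAt (fun θ => f Δj θ)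
      ((A + B) * (Real.cos (2*θj) * (2*1)) * (P Δj + Δj) * Real.sqrt (2 * (P Δj - Δj)) / 2) θj :=
    (((hsin2.const_mul (A + B)).mul_const (P Δj + Δj)).mul_const
      (Real.sqrt (2 * (P Δj - Δj)))).div_const 2
  have hb : deriv (fun θ => f Δj θ) θj
      = (A + B) * c * (P Δj + Δj) * Real.sqrt (2 * (P Δj - Δj)) := by
    rw [hbD.deriv, hcos]; ring
  -- bottom-left entry
  have hq1 : HasDerivAt (fun Δ => Δ - P Δ) (1 - (A - B) / (A + B) * 1) Δj :=
    (hasDerivAt_id Δj).sub hP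
  have hq2 : HasDerivAt (fun Δ => Δ + P Δ) (1 + (A - B) / (A + B) * 1) Δj :=
    (hasDerivAt_id Δj).add hP
  have hu : HasDerivAt (fun Δ => 2 * (P Δ - Δ)) (2 * ((A - B) / (A + B) * 1 - 1)) Δj :=
    (hP.sub (hasDerivAt_id Δj)).const_mul 2
  have hsq : HasDerivAt (fun Δ => Real.sqrt (2 * (P Δ - Δ)))
      (2 * ((A - B) / (A + B) * 1 - 1) / (2 * Real.sqrt (2 * (P Δj - Δj)))) Δj :=
    hu.sqrt hune
  have hn1 := (hq1.const_mul (2 * A * Real.cos (2 * θj)))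
  have hn2 := (hq2.const_mul (B * Real.cos (2 * θj)))
  have hden := hsq.const_mul 2
  have hgD := (((hn1.add hn2).sub hsq).neg).div hden h2sq_ne
  have hcc : deriv (fun Δ => g Δ θj) Δj =
      (-(2 * A * Real.cos (2 * θj) * (1 - (A - B) / (A + B) * 1)
          + B * Real.cos (2 * θj) * (1 + (A - B) / (A + B) * 1)
          - 2 * ((A - B) / (A + B) * 1 - 1) / (2 * Real.sqrt (2 * (P Δj - Δj))))
          * (2 * Real.sqrt (2 * (P Δj - Δj)))
        - -(2 * A * Real.cos (2 * θj) * (Δj - P Δj) + B * Real.cos (2 * θj) * (Δj + P Δj)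
          - Real.sqrt (2 * (P Δj - Δj)))
          * (2 * (2 * ((A - B) / (A + B) * 1 - 1) / (2 * Real.sqrt (2 * (P Δj - Δj))))))
        / (2 * Real.sqrt (2 * (P Δj - Δj))) ^ 2 := hgD.deriv
  have hzero : 2 * A * c * (Δj - P Δj) + B * c * (Δj + P Δj)
      - Real.sqrt (2 * (P Δj - Δj)) = 0 := by linear_combination heq
  rw [hcos] at hcc
  have hsq_ne : Real.sqrt (2 * (P Δj - Δj)) ≠ 0 := ne_of_gt hsq_pos
  have hcc2 : deriv (fun Δ => g Δ θj) Δj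
      = -(3 * A * B * c * Real.sqrt (2 * (P Δj - Δj)) + B)
        / ((A + B) * Real.sqrt (2 * (P Δj - Δj)) ^ 2) := by
    rw [hcc, hzero]
    field_simp
    ring
  obtain ⟨σ, hσj, hσ⟩ : ∃ σ : ℝ, (-1:ℝ)^j = σ ∧ (σ = -1 ∨ σ = 1) := by
    rcases hj with rfl | rfl
    · exact ⟨-1, by norm_num, Or.inl rfl⟩
    · exact ⟨1, by norm_num, Or.inr rfl⟩
  have hD : Δj = (A + B) * (6 * A ^ 2 * C - 3 * A * B * C
      - (-1 : ℝ) ^ j * Real.sqrt (1 + 6 * A * (A + B) * C) - 1) / (18 * A ^ 2 * B) := rfl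
  rw [hσj] at hD
  have hPval : P Δj = C + (A - B) / (A + B) * Δj := rfl
  have hS2 : Real.sqrt (1 + 6 * A * (A + B) * C) ^ 2 = 1 + 6 * A * (A + B) * C :=
    Real.sq_sqrt hs.le
  have hKval : 2 * A * (Δj - P Δj) + B * (Δj + P Δj)
      = -(1 + σ * Real.sqrt (1 + 6 * A * (A + B) * C)) / (3 * A) := by
    rw [hPval, hD]; field_simp; ring
  have hsval : Real.sqrt (2 * (P Δj - Δj))
      = c * (-(1 + σ * Real.sqrt (1 + 6 * A * (A + B) * C)) / (3 * A)) := by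
    rw [← heq, hKval]
  have hne1 : 1 + σ * Real.sqrt (1 + 6 * A * (A + B) * C) ≠ 0 := by
    intro h0
    rw [hsval, h0] at hsq_pos
    norm_num at hsq_pos
  constructor
  · simp only [J, Matrix.trace_fin_two_of]
    rw [ha, hd]; ring
  · simp only [J, Matrix.det_fin_two_of]
    rw [ha, hd, hb, hcc2, hσj, hsval, hPval, hD]
    set S := Real.sqrt (1 + 6 * A * (A + B) * C) with hSdef
    have hC : C = (S ^ 2 - 1) / (6 * A * (A + B)) := by
      rw [hS2]; field_simp; ring
    rw [hC]
    clear hcc hcc2 hgD hden hn1 hn2 hsq hu hq1 hq2 hbD hsin2 hb hd ha hP hzero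
    clear hsval hKval hS2 hD hPval heq hσj hcos hsin hpos hsq_pos hsq_ne h2sq_ne hune hu0 hj hs hC hSdef
    clear J g f
    rcases hσ with rfl | rfl
    · set u : ℝ := 1 + -1 * S with hudef
      have hSu : S = 1 - u := by rw [hudef]; ring
      rw [hSu]
      rcases hc with rfl | rfl <;> (field_simp [hne1]; ring)
    · set u : ℝ := 1 + 1 * S with hudef
      have hSu : S = u - 1 := by rw [hudef]; ring
      rw [hSu]
      rcases hc with rfl | rfl <;> (field_simp [hne1]; ring)
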